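/- Let G be a group with word metric, let (a_n) satisfy |a_{n+1}| ≥ n|a_n| with a_1 ≠ e, and suppose a_M, a_K ∈ B(g,R) with M < K and K ≥ 3. Then |a_{K-1}|/R ≤ 2/(K-2). -/

import Mathlib

open Set

noncomputable def wordLength {G : Type*} [Group G] (S : Set G) (g : G) : ℕ :=
  sInf {n | ∃ f : Fin n → G, (∀ i, f i ∈ S) ∧ (List.ofFn f).prod = g}

noncomputable def wordDist {G : Type*} [Group G] (S : Set G) (x y : G) : ℕ :=
  wordLength S (x⁻¹ * y)

def wordBall {G : Type*} [Group G] (S : Set G) (g : G) (n : ℕ) : Set G :=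
  {h | wordDist S g h ≤ n}

section Aux
variable {G : Type*} [Group G] {S : Set G}

lemma wl_mem_iff (g : G) (n : ℕ) :
    (∃ f : Fin n → G, (∀ i, f i ∈ S) ∧ (List.ofFn f).prod = g) ↔
    ∃ L : List G, (∀ x ∈ L, x ∈ S) ∧ L.prod = g ∧ L.length = n := by
  constructor
  · rintro ⟨f, hf, hprod⟩
    refine ⟨List.ofFn f, ?_, hprod, List.length_ofFn⟩
    intro x hx
    rw [List.mem_ofFn] at hx
    obtain ⟨i, rfl⟩ := hx
    exact hf i
  · rintro ⟨L, hL, hprod, rfl⟩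
    exact ⟨L.get, fun i => hL _ (L.get_mem ..), by simp [hprod]⟩

lemma wordLength_le (L : List G) (hL : ∀ x ∈ L, x ∈ S) :
    wordLength S L.prod ≤ L.length :=
  Nat.sInf_le ((wl_mem_iff _ _).2 ⟨L, hL, rfl, rfl⟩)

lemma exists_rep (hsymm : ∀ s ∈ S, s⁻¹ ∈ S) (hgen : Subgroup.closure S = ⊤) (g : G) :
    ∃ L : List G, (∀ x ∈ L, x ∈ S) ∧ L.prod = g ∧ L.length = wordLength S g := by
  have hne : {n | ∃ f : Fin n → G, (∀ i, f i ∈ S) ∧ (List.ofFn f).prod = g}.Nonempty := by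
    let T : Subgroup G :=
      { carrier := {g | ∃ L : List G, (∀ x ∈ L, x ∈ S) ∧ L.prod = g}
        one_mem' := ⟨[], by simp, by simp⟩
        mul_mem' := by
          rintro x y ⟨L1, h1, rfl⟩ ⟨L2, h2, rfl⟩
          exact ⟨L1 ++ L2, by
            intro z hz
            rcases List.mem_append.1 hz with h | h
            exacts [h1 z h, h2 z h], by simp⟩
        inv_mem' := by
          rintro x ⟨L, hL, rfl⟩
          refine ⟨(L.map Inv.inv).reverse, ?_, (List.prod_inv_reverse L).symm⟩
          intro z hz
          rw [List.mem_reverse, List.mem_map] at hz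
          obtain ⟨w, hw, rfl⟩ := hz
          exact hsymm w (hL w hw) }
    have : g ∈ T := by
      have : Subgroup.closure S ≤ T := Subgroup.closure_le T |>.2 (fun s hs => ⟨[s], by simpa, by simp⟩)
      rw [hgen] at this
      exact this (Subgroup.mem_top g)
    obtain ⟨L, hL, hprod⟩ := this
    exact ⟨L.length, (wl_mem_iff g L.length).2 ⟨L, hL, hprod, rfl⟩⟩
  have := Nat.sInf_mem hne
  exact (wl_mem_iff g _).1 this

variable (hsymm : ∀ s ∈ S, s⁻¹ ∈ S) (hgen : Subgroup.closure S = ⊤)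
include hsymm hgen

lemma wordLength_mul_le (x y : G) :
    wordLength S (x * y) ≤ wordLength S x + wordLength S y := by
  obtain ⟨L1, h1, hp1, hl1⟩ := exists_rep hsymm hgen x
  obtain ⟨L2, h2, hp2, hl2⟩ := exists_rep hsymm hgen y
  have := wordLength_le (L1 ++ L2) (fun z hz => by
    rcases List.mem_append.1 hz with h | h
    exacts [h1 z h, h2 z h])
  simpa [hp1, hp2, hl1, hl2] using this

lemma wordLength_inv (x : G) : wordLength S x⁻¹ = wordLength S x := by
  have key : ∀ z : G, wordLength S z⁻¹ ≤ wordLength S z := by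
    intro z
    obtain ⟨L, hL, hp, hl⟩ := exists_rep hsymm hgen z
    have := wordLength_le (L.map Inv.inv).reverse (fun w hw => by
      rw [List.mem_reverse, List.mem_map] at hw
      obtain ⟨v, hv, rfl⟩ := hw
      exact hsymm v (hL v hv))
    rw [← List.prod_inv_reverse] at this
    simpa [hp, hl] using this
  have h1 := key x
  have h2 := key x⁻¹
  rw [inv_inv] at h2
  omega

end Aux

/-- If `a_M, a_K ∈ B(g,R)` with `M < K`, `K ≥ 3`, for a rapidly spreading
sequence, then `|a_{K-1}|/R ≤ 2/(K-2)`. -/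
theorem rapidly_spreading_in_ball {G : Type*} [Group G] (S : Set G)
    (hfin : S.Finite) (hone : (1 : G) ∈ S) (hsymm : ∀ s ∈ S, s⁻¹ ∈ S)
    (hgen : Subgroup.closure S = ⊤)
    (a : ℕ → G) (ha1 : a 1 ≠ 1)
    (hgrow : ∀ n : ℕ, 1 ≤ n → n * wordLength S (a n) ≤ wordLength S (a (n + 1)))
    (g : G) (R : ℕ) (M K : ℕ) (hMK : M < K) (hM : 1 ≤ M) (hK : 3 ≤ K)
    (haM : a M ∈ wordBall S g R) (haK : a K ∈ wordBall S g R) :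
    (wordLength S (a (K - 1)) : ℝ) / (R : ℝ) ≤ 2 / ((K : ℝ) - 2) := by
  set ℓ : ℕ → ℕ := fun n => wordLength S (a n) with hℓ
  -- monotonicity for n ≥ 1
  have hmono : ∀ m n : ℕ, 1 ≤ m → m ≤ n → ℓ m ≤ ℓ n := by
    intro m n h1 hmn
    induction n with
    | zero => omega
    | succ k ih =>
      rcases Nat.lt_or_ge m (k+1) with h | h
      · have hk : m ≤ k := by omega
        have h1k : 1 ≤ k := by omega
        calc ℓ m ≤ ℓ k := ih hk
          _ ≤ k * ℓ k := Nat.le_mul_of_pos_left _ h1k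
          _ ≤ ℓ (k+1) := hgrow k h1k
      · have : m = k + 1 := by omega
        rw [this]
  -- d(aM, aK) ≤ 2R
  have htri : wordDist S (a M) (a K) ≤ 2 * R := by
    have h1 : wordDist S (a M) g = wordDist S g (a M) := by
      unfold wordDist
      rw [← wordLength_inv hsymm hgen]
      simp [mul_inv_rev]
    have h2 : wordDist S (a M) (a K) ≤ wordDist S (a M) g + wordDist S g (a K) := by
      unfold wordDist
      have := wordLength_mul_le hsymm hgen ((a M)⁻¹ * g) (g⁻¹ * a K)
      simpa [mul_assoc] using this
    have hb1 : wordDist S g (a M) ≤ R := haM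
    have hb2 : wordDist S g (a K) ≤ R := haK
    omega
  -- d(aM, aK) ≥ ℓ K - ℓ M
  have hlow : ℓ K ≤ ℓ M + wordDist S (a M) (a K) := by
    have := wordLength_mul_le hsymm hgen (a M) ((a M)⁻¹ * a K)
    simpa [wordDist] using this
  -- ℓ K ≥ (K-1) ℓ (K-1)
  have hK1 : (K - 1) * ℓ (K - 1) ≤ ℓ K := by
    have h := hgrow (K - 1) (by omega)
    have : K - 1 + 1 = K := by omega
    rwa [this] at h
  have hMle : ℓ M ≤ ℓ (K - 1) := hmono M (K - 1) hM (by omega)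
  -- key inequality in ℕ
  have hkey : (K - 2) * ℓ (K - 1) ≤ 2 * R := by
    have : (K - 2) * ℓ (K - 1) + ℓ (K - 1) = (K - 1) * ℓ (K - 1) := by
      have : K - 2 + 1 = K - 1 := by omega
      rw [← this]; ring
    omega
  -- cast to ℝ
  have hKR : (2 : ℝ) ≤ (K : ℝ) - 2 + 1 := by
    have : (3 : ℝ) ≤ (K : ℝ) := by exact_mod_cast hK
    linarith
  have hKpos : (0 : ℝ) < (K : ℝ) - 2 := by
    have : (3 : ℝ) ≤ (K : ℝ) := by exact_mod_cast hK
    linarith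
  have hcast : ((K : ℝ) - 2) * (ℓ (K - 1) : ℝ) ≤ 2 * R := by
    have h2 : ((K - 2 : ℕ) : ℝ) = (K : ℝ) - 2 := by
      have : 2 ≤ K := by omega
      push_cast [Nat.cast_sub this]
      ring
    calc ((K : ℝ) - 2) * (ℓ (K - 1) : ℝ) = ((K - 2 : ℕ) : ℝ) * (ℓ (K-1) : ℝ) := by rw [h2]
      _ ≤ ((2 * R : ℕ) : ℝ) := by exact_mod_cast hkey
      _ = 2 * R := by push_cast; ring
  rcases Nat.eq_zero_or_pos R with hR | hR
  · have : ℓ (K - 1) = 0 := by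
      have := hkey
      simp [hR] at this
      omega
    simp [this, hR]
    positivity
  · have hRpos : (0 : ℝ) < (R : ℝ) := by exact_mod_cast hR
    rw [div_le_div_iff₀ hRpos hKpos]
    nlinarith [hcast]
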